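/- Let X ⊆ ℝ^d be a nonempty closed convex set, f : ℝ^d → ℝ convex on X, x̂ ∈ X, and x¹ ∈ X. Let h₁, …, h_{N+1} > 0, let x^{k+1} = P_X(x^k − h_k·g^k) for k = 1, …, N where g^k is a subgradient of f at x^k, and let g^{N+1} be a subgradient of f at x^{N+1}. Define v_{N+1} = 1 and v_k = h_{N+1} / (∑_{i=k+1}^{N+1} h_i·v_i) for k = N down to 0. Then f(x^{N+1}) − f(x̂) ≤ (v₀²/(2·h_{N+1}))·‖x¹ − x̂‖² + (1/(2·h_{N+1}))·∑_{k=1}^{N+1} h_k²·v_k²·‖g^k‖². -/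

import Mathlib

open Finset

set_option maxHeartbeats 1000000 in
/-- Inequality (neq_Zamani_1): with the backward-recursive weights
`v_{N+1} = 1`, `v_k = h_{N+1} / ∑_{i=k+1}^{N+1} h_i v_i`, the projected subgradient
method satisfies
`f(x^{N+1}) − f(x̂) ≤ (v₀²/(2h_{N+1}))‖x¹ − x̂‖² + (1/(2h_{N+1})) ∑_{k=1}^{N+1} h_k² v_k² ‖g^k‖²`. -/
theorem last_iterate_bound_with_recursive_weights
    (d N : ℕ) (X : Set (EuclideanSpace ℝ (Fin d)))
    (hXne : X.Nonempty) (hXclosed : IsClosed X) (hXconv : Convex ℝ X)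
    (f : EuclideanSpace ℝ (Fin d) → ℝ)
    (hconv : ConvexOn ℝ X f)
    (xhat : EuclideanSpace ℝ (Fin d)) (hxhat : xhat ∈ X)
    (h : ℕ → ℝ) (hpos : ∀ k, 1 ≤ k → k ≤ N + 1 → 0 < h k)
    (x g : ℕ → EuclideanSpace ℝ (Fin d))
    (hx1X : x 1 ∈ X)
    (hsub : ∀ k, 1 ≤ k → k ≤ N + 1 →
      ∀ y ∈ X, f (x k) + (inner ℝ (g k) (y - x k) : ℝ) ≤ f y)
    (hupd : ∀ k, 1 ≤ k → k ≤ N →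
      x (k + 1) ∈ X ∧
      ∀ y ∈ X,
        ‖x (k + 1) - (x k - h k • g k)‖ ≤ ‖y - (x k - h k • g k)‖)
    (v : ℕ → ℝ)
    (hvN1 : v (N + 1) = 1)
    (hvrec : ∀ k, k ≤ N → v k = h (N + 1) / ∑ i ∈ Icc (k + 1) (N + 1), h i * v i) :
    f (x (N + 1)) - f xhat ≤
      (v 0) ^ 2 / (2 * h (N + 1)) * ‖x 1 - xhat‖ ^ 2 +
        1 / (2 * h (N + 1)) * ∑ k ∈ Icc 1 (N + 1), (h k) ^ 2 * (v k) ^ 2 * ‖g k‖ ^ 2 := by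
  set H := h (N + 1) with hHdef
  have hHpos : 0 < H := hpos (N + 1) (by omega) le_rfl
  -- positivity of the weights v
  have hvpos : ∀ m k, k ≤ N + 1 → N + 1 ≤ k + m → 0 < v k := by
    intro m
    induction m with
    | zero =>
      intro k hk1 hk2
      have hk : k = N + 1 := by omega
      rw [hk, hvN1]; norm_num
    | succ m ih =>
      intro k hk1 hk2
      rcases Nat.lt_or_ge k (N + 1) with hlt | hge
      · have hkN : k ≤ N := by omega
        rw [hvrec k hkN]
        apply div_pos hHpos
        apply Finset.sum_pos
        · intro i hi
          rw [Finset.mem_Icc] at hi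
          exact mul_pos (hpos i (by omega) hi.2) (ih i hi.2 (by omega))
        · exact ⟨N + 1, by rw [Finset.mem_Icc]; omega⟩
      · have hk : k = N + 1 := by omega
        rw [hk, hvN1]; norm_num
  have hv : ∀ k, k ≤ N + 1 → 0 < v k := fun k hk => hvpos (N + 1) k hk (by omega)
  -- the tail sums
  set S : ℕ → ℝ := fun j => ∑ i ∈ Icc j (N + 1), h i * v i with hSdef
  have hSeq : ∀ j, S j = ∑ i ∈ Icc j (N + 1), h i * v i := fun j => rfl
  have hSpos : ∀ j, 1 ≤ j → j ≤ N + 1 → 0 < S j := by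
    intro j hj1 hj2
    rw [hSeq]
    apply Finset.sum_pos
    · intro i hi
      rw [Finset.mem_Icc] at hi
      exact mul_pos (hpos i (by omega) hi.2) (hv i hi.2)
    · exact ⟨N + 1, by rw [Finset.mem_Icc]; omega⟩
  have hkey : ∀ j, j ≤ N → v j * S (j + 1) = H := by
    intro j hj
    rw [hvrec j hj, hSeq]
    exact div_mul_cancel₀ H (hSpos (j + 1) (by omega) (by omega)).ne'
  have hSsplit : ∀ j, j ≤ N → S (j + 1) = h (j + 1) * v (j + 1) + S (j + 2) := by
    intro j hj
    rw [hSeq, hSeq]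
    rw [show Icc (j + 1) (N + 1) = insert (j + 1) (Icc (j + 2) (N + 1)) from
      Finset.ext fun i => by simp only [Finset.mem_Icc, Finset.mem_insert]; omega]
    rw [Finset.sum_insert (by simp only [Finset.mem_Icc]; omega)]
  -- monotonicity of v
  have hvmono : ∀ j, j + 1 ≤ N → v j < v (j + 1) := by
    intro j hj
    have e1 := hkey j (by omega)
    have e2 := hkey (j + 1) hj
    have e3 := hSsplit j (by omega)
    have p1 := hSpos (j + 1) (by omega) (by omega)
    have p2 := hSpos (j + 2) (by omega) (by omega)
    have hv1 := hv (j + 1) (by omega)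
    have hh := hpos (j + 1) (by omega) (by omega)
    nlinarith [mul_pos hh hv1]
  -- v N = 1
  have hvN : v N = 1 := by
    have e := hkey N le_rfl
    have hS : S (N + 1) = H := by
      rw [hSeq, Finset.Icc_self, Finset.sum_singleton, hvN1]; ring
    rw [hS] at e
    exact mul_right_cancel₀ (ne_of_gt hHpos) (by rw [e, one_mul])
  -- key identity
  have hid : ∀ i, i + 1 ≤ N → h (i + 1) * v (i + 1) ^ 2 * v i = H * (v (i + 1) - v i) := by
    intro i hi
    have e1 := hkey i (by omega)
    have e2 := hkey (i + 1) hi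
    have e3 := hSsplit i (by omega)
    linear_combination v (i + 1) * e1 - v i * e2 - v i * v (i + 1) * e3
  -- iterates stay in X
  have hxX : ∀ k, 1 ≤ k → k ≤ N + 1 → x k ∈ X := by
    intro k hk1 hk2
    cases k with
    | zero => omega
    | succ m =>
      rcases Nat.eq_zero_or_pos m with rfl | hm
      · exact hx1X
      · exact (hupd m hm (by omega)).1
  -- the comparator sequence z
  let z : ℕ → EuclideanSpace ℝ (Fin d) := fun j =>
    Nat.rec (motive := fun _ => EuclideanSpace ℝ (Fin d)) xhat
      (fun i zi => ((v (i + 1) - v i) / v (i + 1)) • x (i + 1) + (v i / v (i + 1)) • zi) j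
  have hz0 : z 0 = xhat := rfl
  have hzsucc : ∀ i, z (i + 1) =
      ((v (i + 1) - v i) / v (i + 1)) • x (i + 1) + (v i / v (i + 1)) • z i := fun i => rfl
  have hzX : ∀ j, j ≤ N → z j ∈ X := by
    intro j
    induction j with
    | zero => intro _; rw [hz0]; exact hxhat
    | succ i ih =>
      intro hij
      rw [hzsucc]
      have hvi := hv i (by omega)
      have hvi1 := hv (i + 1) (by omega)
      have hlt := hvmono i hij
      exact hXconv (hxX (i + 1) (by omega) (by omega)) (ih (by omega))
        (div_nonneg (by linarith) hvi1.le) (div_nonneg hvi.le hvi1.le)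
        (by field_simp; ring)
  -- geometric step
  have hzstep : ∀ i, i + 1 ≤ N →
      x (i + 1) - z (i + 1) = (v i / v (i + 1)) • (x (i + 1) - z i) := by
    intro i hi
    have hvi1 := (hv (i + 1) (by omega)).ne'
    rw [hzsucc, smul_sub]
    have hc : (v (i + 1) - v i) / v (i + 1) = 1 - v i / v (i + 1) := by field_simp
    rw [hc, sub_smul, one_smul]
    abel
  -- convexity step for f
  have hfz : ∀ i, i + 1 ≤ N →
      v (i + 1) * f (z (i + 1)) ≤ (v (i + 1) - v i) * f (x (i + 1)) + v i * f (z i) := by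
    intro i hi
    have hvi := hv i (by omega)
    have hvi1 := hv (i + 1) (by omega)
    have hlt := hvmono i hi
    have hcc := hconv.2 (hxX (i + 1) (by omega) (by omega)) (hzX i (by omega))
      (div_nonneg (by linarith : (0:ℝ) ≤ v (i + 1) - v i) hvi1.le)
      (div_nonneg hvi.le hvi1.le) (by field_simp; ring)
    rw [← hzsucc i] at hcc
    have e : v (i + 1) * (((v (i + 1) - v i) / v (i + 1)) * f (x (i + 1)) +
        (v i / v (i + 1)) * f (z i)) = (v (i + 1) - v i) * f (x (i + 1)) + v i * f (z i) := by
      field_simp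
      try ring
    have h2 := mul_le_mul_of_nonneg_left hcc hvi1.le
    simp only [smul_eq_mul] at h2
    linarith [h2, e.ge, e.le]
  -- subgradient inequality in inner-product form
  have hB : ∀ k, 1 ≤ k → k ≤ N + 1 → ∀ y ∈ X,
      f (x k) - f y ≤ (inner ℝ (g k) (x k - y) : ℝ) := by
    intro k hk1 hk2 y hy
    have h1 := hsub k hk1 hk2 y hy
    have h2 : (inner ℝ (g k) (y - x k) : ℝ) = -(inner ℝ (g k) (x k - y) : ℝ) := by
      rw [← inner_neg_right]; congr 1; abel
    linarith [h1, h2.le, h2.ge]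
  -- projection (descent) inequality
  have hA : ∀ k, 1 ≤ k → k ≤ N → ∀ y ∈ X,
      ‖x (k + 1) - y‖ ^ 2 ≤ ‖x k - y‖ ^ 2 - 2 * h k * (inner ℝ (g k) (x k - y) : ℝ)
        + (h k) ^ 2 * ‖g k‖ ^ 2 := by
    intro k hk1 hkN y hy
    obtain ⟨hmem, hmin⟩ := hupd k hk1 hkN
    set p := x k - h k • g k with hp
    have hbdd : BddBelow (Set.range fun w : X => ‖p - (w : EuclideanSpace ℝ (Fin d))‖) :=
      ⟨0, by rintro b ⟨w, rfl⟩; positivity⟩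
    have : Nonempty X := ⟨⟨x (k + 1), hmem⟩⟩
    have hiInf : ‖p - x (k + 1)‖ = ⨅ w : X, ‖p - (w : EuclideanSpace ℝ (Fin d))‖ := by
      apply le_antisymm
      · apply le_ciInf
        intro w
        calc ‖p - x (k + 1)‖ = ‖x (k + 1) - p‖ := norm_sub_rev _ _
          _ ≤ ‖(w : EuclideanSpace ℝ (Fin d)) - p‖ := hmin w w.2
          _ = ‖p - (w : EuclideanSpace ℝ (Fin d))‖ := norm_sub_rev _ _
      · exact ciInf_le hbdd ⟨x (k + 1), hmem⟩
    have hvar := (norm_eq_iInf_iff_real_inner_le_zero hXconv hmem).mp hiInf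
    have key := hvar y hy
    have e1 : ‖p - y‖ ^ 2 = ‖p - x (k + 1)‖ ^ 2
        + 2 * (inner ℝ (p - x (k + 1)) (x (k + 1) - y) : ℝ) + ‖x (k + 1) - y‖ ^ 2 := by
      have hd : p - y = (p - x (k + 1)) + (x (k + 1) - y) := by abel
      rw [hd, norm_add_sq_real]
    have e2 : (inner ℝ (p - x (k + 1)) (x (k + 1) - y) : ℝ)
        = -(inner ℝ (p - x (k + 1)) (y - x (k + 1)) : ℝ) := by
      rw [← inner_neg_right]; congr 1; abel
    have e3 : ‖p - y‖ ^ 2 = ‖x k - y‖ ^ 2 - 2 * h k * (inner ℝ (g k) (x k - y) : ℝ)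
        + (h k) ^ 2 * ‖g k‖ ^ 2 := by
      have hd : p - y = (x k - y) - h k • g k := by rw [hp]; abel
      rw [hd, norm_sub_sq_real, real_inner_smul_right, norm_smul,
        ← real_inner_comm (x k - y) (g k)]
      simp only [Real.norm_eq_abs, mul_pow, sq_abs]
      ring
    linarith [sq_nonneg ‖p - x (k + 1)‖, key, e1, e2, e3]
  -- main invariant by induction
  have main : ∀ j, j ≤ N →
      v j ^ 2 * ‖x (j + 1) - z j‖ ^ 2 + 2 * H * (f (z j) - f xhat) ≤
        v 0 ^ 2 * ‖x 1 - xhat‖ ^ 2 + ∑ k ∈ Icc 1 j, (h k) ^ 2 * (v k) ^ 2 * ‖g k‖ ^ 2 := by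
    intro j
    induction j with
    | zero =>
      intro _
      rw [hz0]
      simp
    | succ i ih =>
      intro hi1
      have IH := ih (by omega)
      have hvip := hv i (by omega)
      have hvi1p := hv (i + 1) (by omega)
      have hhp := hpos (i + 1) (by omega) (by omega)
      have hzi1X : z (i + 1) ∈ X := hzX (i + 1) hi1
      have hAi := hA (i + 1) (by omega) hi1 (z (i + 1)) hzi1X
      have hBi := hB (i + 1) (by omega) (by omega) (z (i + 1)) hzi1X
      have hfzi := hfz i hi1
      have hidi := hid i hi1
      have hgeom : v (i + 1) ^ 2 * ‖x (i + 1) - z (i + 1)‖ ^ 2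
          = v i ^ 2 * ‖x (i + 1) - z i‖ ^ 2 := by
        rw [hzstep i hi1, norm_smul, Real.norm_eq_abs, abs_div,
          abs_of_pos hvip, abs_of_pos hvi1p]
        field_simp
      have hstepf : 2 * H * (f (z (i + 1)) - f (z i)) ≤
          2 * h (i + 1) * v (i + 1) ^ 2 * (f (x (i + 1)) - f (z (i + 1))) := by
        have h1 : v i * (f (z (i + 1)) - f (z i)) ≤
            (v (i + 1) - v i) * (f (x (i + 1)) - f (z (i + 1))) := by nlinarith [hfzi]
        have e6 : v i * (2 * h (i + 1) * v (i + 1) ^ 2 * (f (x (i + 1)) - f (z (i + 1))))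
            = 2 * H * ((v (i + 1) - v i) * (f (x (i + 1)) - f (z (i + 1)))) := by
          linear_combination (2 * (f (x (i + 1)) - f (z (i + 1)))) * hidi
        have h2 := mul_le_mul_of_nonneg_left h1 (by positivity : (0:ℝ) ≤ 2 * H)
        have h3 : v i * (2 * H * (f (z (i + 1)) - f (z i))) ≤
            v i * (2 * h (i + 1) * v (i + 1) ^ 2 * (f (x (i + 1)) - f (z (i + 1)))) := by
          linarith [h2, e6]
        exact le_of_mul_le_mul_left h3 hvip
      have hApos := mul_le_mul_of_nonneg_left hAi (sq_nonneg (v (i + 1)))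
      have hBscaled := mul_le_mul_of_nonneg_left hBi
        (by positivity : (0:ℝ) ≤ 2 * h (i + 1) * v (i + 1) ^ 2)
      have hsum : ∑ k ∈ Icc 1 (i + 1), (h k) ^ 2 * (v k) ^ 2 * ‖g k‖ ^ 2
          = (∑ k ∈ Icc 1 i, (h k) ^ 2 * (v k) ^ 2 * ‖g k‖ ^ 2)
            + (h (i + 1)) ^ 2 * (v (i + 1)) ^ 2 * ‖g (i + 1)‖ ^ 2 :=
        Finset.sum_Icc_succ_top (by omega) _
      linarith [hApos, hgeom, hstepf, IH, hsum, hBscaled]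
  -- final assembly
  have hmainN := main N le_rfl
  rw [hvN] at hmainN
  have hzNX := hzX N le_rfl
  have hBN := hB (N + 1) (by omega) le_rfl (z N) hzNX
  have hyoung : 2 * H * (inner ℝ (g (N + 1)) (x (N + 1) - z N) : ℝ) ≤
      ‖x (N + 1) - z N‖ ^ 2 + H ^ 2 * ‖g (N + 1)‖ ^ 2 := by
    have h0 : (0:ℝ) ≤ ‖(x (N + 1) - z N) - H • g (N + 1)‖ ^ 2 := sq_nonneg _
    rw [norm_sub_sq_real, real_inner_smul_right, norm_smul] at h0
    simp only [Real.norm_eq_abs, mul_pow, sq_abs] at h0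
    rw [real_inner_comm] at h0
    linarith [h0]
  have hsumN : ∑ k ∈ Icc 1 (N + 1), (h k) ^ 2 * (v k) ^ 2 * ‖g k‖ ^ 2
      = (∑ k ∈ Icc 1 N, (h k) ^ 2 * (v k) ^ 2 * ‖g k‖ ^ 2)
        + (h (N + 1)) ^ 2 * (v (N + 1)) ^ 2 * ‖g (N + 1)‖ ^ 2 :=
    Finset.sum_Icc_succ_top (by omega) _
  rw [hvN1] at hsumN
  have hfinal : 2 * H * (f (x (N + 1)) - f xhat) ≤
      v 0 ^ 2 * ‖x 1 - xhat‖ ^ 2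
        + ∑ k ∈ Icc 1 (N + 1), (h k) ^ 2 * (v k) ^ 2 * ‖g k‖ ^ 2 := by
    linarith [hmainN, hyoung, hsumN,
      mul_le_mul_of_nonneg_left hBN (by positivity : (0:ℝ) ≤ 2 * H)]
  have h2H : (0:ℝ) < 2 * H := by positivity
  have hdiv : f (x (N + 1)) - f xhat ≤
      (v 0 ^ 2 * ‖x 1 - xhat‖ ^ 2
        + ∑ k ∈ Icc 1 (N + 1), (h k) ^ 2 * (v k) ^ 2 * ‖g k‖ ^ 2) / (2 * H) := by
    rw [le_div_iff₀ h2H]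
    linarith [hfinal]
  have heq : (v 0 ^ 2 * ‖x 1 - xhat‖ ^ 2
      + ∑ k ∈ Icc 1 (N + 1), (h k) ^ 2 * (v k) ^ 2 * ‖g k‖ ^ 2) / (2 * H)
      = v 0 ^ 2 / (2 * H) * ‖x 1 - xhat‖ ^ 2
        + 1 / (2 * H) * ∑ k ∈ Icc 1 (N + 1), (h k) ^ 2 * (v k) ^ 2 * ‖g k‖ ^ 2 := by
    ring
  rw [heq] at hdiv
  exact hdiv
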